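/- If U = (ρ, ρu, ρv, E) is an admissible Euler state (ρ > 0, p > 0 with p = (γ-1)(E - ρ(u²+v²)/2), γ > 1), ν ∈ ℝ² is a unit vector, and α₀ ≥ |u·ν| + c where c = √(γp/ρ), then both states U + (1/α₀) F(U)·ν and U - (1/α₀) F(U)·ν are admissible, where F(U)·ν = ((ρu)·ν, (ρu·ν)u + pν₁, (ρu·ν)v + pν₂, (E+p)(u·ν)). -/

import Mathlib

set_option maxHeartbeats 1000000

lemma euler_aux (γ ρ u v E p ν₁ ν₂ s : ℝ)
    (hγ : 1 < γ) (hρ : 0 < ρ)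
    (hp : p = (γ - 1) * (E - ρ * (u ^ 2 + v ^ 2) / 2))
    (hppos : 0 < p)
    (hν : ν₁ ^ 2 + ν₂ ^ 2 = 1)
    (hs : s ≠ 0)
    (ha : |s| * |u * ν₁ + v * ν₂| + |s| * Real.sqrt (γ * p / ρ) ≤ 1) :
    0 < ρ + s * (ρ * (u * ν₁ + v * ν₂)) ∧
    0 < (E + s * ((E + p) * (u * ν₁ + v * ν₂))) -
      ((ρ * u + s * (ρ * (u * ν₁ + v * ν₂) * u + p * ν₁)) ^ 2 +
       (ρ * v + s * (ρ * (u * ν₁ + v * ν₂) * v + p * ν₂)) ^ 2) /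
      (2 * (ρ + s * (ρ * (u * ν₁ + v * ν₂)))) := by
  set un := u * ν₁ + v * ν₂ with hun
  have hcq : 0 < γ * p / ρ := by positivity
  have hc : 0 < Real.sqrt (γ * p / ρ) := Real.sqrt_pos.mpr hcq
  have hc2 : (Real.sqrt (γ * p / ρ)) ^ 2 = γ * p / ρ := Real.sq_sqrt hcq.le
  set c := Real.sqrt (γ * p / ρ) with hcdef
  have hc2' : c ^ 2 * ρ = γ * p := by rw [hc2]; field_simp
  have hsabs : 0 < |s| := abs_pos.mpr hs
  have hsun : |s * un| = |s| * |un| := abs_mul s un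
  have ha2 : |s| * c ≤ 1 + s * un := by
    nlinarith [neg_abs_le (s * un)]
  have hapos : 0 < 1 + s * un := lt_of_lt_of_le (by positivity) ha2
  have hρa : 0 < ρ + s * (ρ * un) := by nlinarith
  refine ⟨hρa, ?_⟩
  rw [sub_pos, div_lt_iff₀ (by linarith : (0:ℝ) < 2 * (ρ + s * (ρ * un)))]
  have key : (E + s * ((E + p) * un)) * (2 * (ρ + s * (ρ * un))) -
      ((ρ * u + s * (ρ * un * u + p * ν₁)) ^ 2 +
       (ρ * v + s * (ρ * un * v + p * ν₂)) ^ 2) =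
      (1 + s * un) ^ 2 * (2 * ρ * E - ρ ^ 2 * (u ^ 2 + v ^ 2)) - s ^ 2 * p ^ 2 := by
    rw [hun]
    linear_combination (-(s * p) ^ 2) * hν
  have hE : (γ - 1) * (2 * ρ * E - ρ ^ 2 * (u ^ 2 + v ^ 2)) = 2 * ρ * p := by
    linear_combination (-2) * ρ * hp
  have hasq : s ^ 2 * c ^ 2 ≤ (1 + s * un) ^ 2 := by
    have h := mul_le_mul ha2 ha2 (by positivity) hapos.le
    nlinarith [sq_abs s]
  have hs2 : 0 < s ^ 2 := by positivity
  have h1 : s ^ 2 * (γ * p) ≤ (1 + s * un) ^ 2 * ρ := by nlinarith [hasq, hc2', hρ]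
  have h3 : (γ - 1) * ((1 + s * un) ^ 2 * (2 * ρ * E - ρ ^ 2 * (u ^ 2 + v ^ 2)) - s ^ 2 * p ^ 2)
      = (1 + s * un) ^ 2 * (2 * ρ * p) - (γ - 1) * s ^ 2 * p ^ 2 := by
    linear_combination (1 + s * un) ^ 2 * hE
  have h4 : s ^ 2 * (γ * p) * (2 * p) ≤ (1 + s * un) ^ 2 * ρ * (2 * p) := by
    nlinarith [h1, hppos]
  have h2 : 0 < (1 + s * un) ^ 2 * (2 * ρ * E - ρ ^ 2 * (u ^ 2 + v ^ 2)) - s ^ 2 * p ^ 2 := by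
    nlinarith [h3, h4, mul_pos hs2 (mul_pos hppos hppos)]
  linarith [key, h2]

/-- The admissible set for the 2D compressible Euler equations. -/
def eulerAdmissible : Set (Fin 4 → ℝ) :=
  {U | 0 < U 0 ∧ 0 < U 3 - ((U 1) ^ 2 + (U 2) ^ 2) / (2 * U 0)}

/-- Lax–Friedrichs admissibility property: for an admissible Euler state `U`,
a unit direction `ν`, and `α₀ ≥ |u·ν| + c`, both `U ± (1/α₀) F(U)·ν` are admissible. -/
theorem laxFriedrichs_admissible
    (γ ρ u v E p ν₁ ν₂ α₀ : ℝ)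
    (hγ : 1 < γ) (hρ : 0 < ρ)
    (hp : p = (γ - 1) * (E - ρ * (u ^ 2 + v ^ 2) / 2))
    (hppos : 0 < p)
    (hν : ν₁ ^ 2 + ν₂ ^ 2 = 1)
    (hα : |u * ν₁ + v * ν₂| + Real.sqrt (γ * p / ρ) ≤ α₀) :
    let un : ℝ := u * ν₁ + v * ν₂
    let U : Fin 4 → ℝ := ![ρ, ρ * u, ρ * v, E]
    let Fν : Fin 4 → ℝ := ![ρ * un, ρ * un * u + p * ν₁, ρ * un * v + p * ν₂, (E + p) * un]
    U + (1 / α₀) • Fν ∈ eulerAdmissible ∧ U - (1 / α₀) • Fν ∈ eulerAdmissible := by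
  intro un U Fν
  have hcq : 0 < γ * p / ρ := by positivity
  have hc : 0 < Real.sqrt (γ * p / ρ) := Real.sqrt_pos.mpr hcq
  have hα0 : 0 < α₀ := lt_of_lt_of_le (by positivity) hα
  have hs1 : (1 / α₀ : ℝ) ≠ 0 := by positivity
  have hale : |(1 / α₀ : ℝ)| * |u * ν₁ + v * ν₂| + |(1 / α₀ : ℝ)| * Real.sqrt (γ * p / ρ) ≤ 1 := by
    rw [abs_of_pos (by positivity : (0:ℝ) < 1 / α₀)]
    rw [div_mul_eq_mul_div, div_mul_eq_mul_div, one_mul, one_mul, ← add_div,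
      div_le_one hα0]
    exact hα
  have hplus := euler_aux γ ρ u v E p ν₁ ν₂ (1 / α₀) hγ hρ hp hppos hν hs1 hale
  have hminus := euler_aux γ ρ u v E p ν₁ ν₂ (-(1 / α₀)) hγ hρ hp hppos hν
    (neg_ne_zero.mpr hs1) (by rwa [abs_neg])
  simp only [eulerAdmissible, Set.mem_setOf_eq, Pi.add_apply, Pi.sub_apply, Pi.smul_apply,
    smul_eq_mul, U, Fν, un, Matrix.cons_val_zero, Matrix.cons_val_one, Matrix.head_cons,
    Matrix.cons_val_two, Matrix.tail_cons, Matrix.cons_val_three]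
  refine ⟨⟨?_, ?_⟩, ?_, ?_⟩
  · linarith [hplus.1]
  · linarith [hplus.2]
  · linarith [hminus.1]
  · have heq : E - 1 / α₀ * ((E + p) * (u * ν₁ + v * ν₂)) -
        ((ρ * u - 1 / α₀ * (ρ * (u * ν₁ + v * ν₂) * u + p * ν₁)) ^ 2 +
            (ρ * v - 1 / α₀ * (ρ * (u * ν₁ + v * ν₂) * v + p * ν₂)) ^ 2) /
          (2 * (ρ - 1 / α₀ * (ρ * (u * ν₁ + v * ν₂)))) =
        E + -(1 / α₀) * ((E + p) * (u * ν₁ + v * ν₂)) -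
        ((ρ * u + -(1 / α₀) * (ρ * (u * ν₁ + v * ν₂) * u + p * ν₁)) ^ 2 +
            (ρ * v + -(1 / α₀) * (ρ * (u * ν₁ + v * ν₂) * v + p * ν₂)) ^ 2) /
          (2 * (ρ + -(1 / α₀) * (ρ * (u * ν₁ + v * ν₂)))) := by ring_nf
    rw [heq]
    exact hminus.2
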